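/- Let D' ⊆ ℂ^m be a convex domain containing no complex affine line and let k ≥ 1. Then every holomorphic map φ : D' × ℂ^k → ℂ^m with φ(D' × ℂ^k) ⊆ D' is independent of the second variable: φ(z, w) = φ(z, w') for all z ∈ D' and all w, w' ∈ ℂ^k. In particular, every holomorphic self-map f of D' × ℂ^k has the form f(z, w) = (φ(z), ψ(z, w)) where φ : D' → D' is holomorphic. -/

import Mathlib

/-- A convex domain: a nonempty open convex subset. -/
def IsConvexDomain {m : ℕ} (D : Set (Fin m → ℂ)) : Prop :=
  IsOpen D ∧ Convex ℝ D ∧ D.Nonempty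

/-- `S` contains a complex affine line `{p + ζ • v : ζ ∈ ℂ}` with `v ≠ 0`. -/
def ContainsComplexLine {E : Type*} [AddCommGroup E] [Module ℂ E] (S : Set E) : Prop :=
  ∃ p v : E, v ≠ 0 ∧ ∀ ζ : ℂ, p + ζ • v ∈ S

open Complex Bornology Set

/-- Liouville for maps into a half-plane. -/
lemma halfplane_liouville {g : ℂ → ℂ} (hg : Differentiable ℂ g) {c : ℝ}
    (hb : ∀ ζ, (g ζ).re ≤ c) (a b : ℂ) : g a = g b := by
  have hne : ∀ ζ, g ζ - (c + 1) ≠ 0 := by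
    intro ζ h
    have : (g ζ).re = c + 1 := by
      have := congrArg Complex.re h
      simpa [sub_eq_zero] using congrArg Complex.re (sub_eq_zero.mp h)
    linarith [hb ζ]
  set F : ℂ → ℂ := fun ζ => (g ζ - (c + 1))⁻¹ with hF
  have hFd : Differentiable ℂ F := (hg.sub_const _).inv hne
  have hbound : IsBounded (range F) := by
    rw [isBounded_iff_forall_norm_le]
    refine ⟨1, ?_⟩
    rintro x ⟨ζ, rfl⟩
    have h1 : (1 : ℝ) ≤ ‖g ζ - (c + 1)‖ := by
      have : (g ζ - (c + 1)).re ≤ -1 := by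
        simp only [Complex.sub_re, Complex.ofReal_re, Complex.add_re, Complex.one_re,
          Complex.ofReal_im]
        have := hb ζ
        norm_num
        linarith
      calc (1 : ℝ) ≤ |(g ζ - (c + 1)).re| := le_abs.mpr (Or.inr (by linarith))
        _ ≤ ‖g ζ - (c+1)‖ := Complex.abs_re_le_norm _
    have := h1
    simp only [hF, norm_inv]
    rw [inv_le_one_iff₀]
    right; exact h1
  have := hFd.apply_eq_apply_of_bounded hbound a b
  simpa [hF] using this

lemma smul_split {m : ℕ} (ζ : ℂ) (y : Fin m → ℂ) :
    ζ • y = ζ.re • y + ζ.im • (Complex.I • y) := by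
  funext i
  simp only [Pi.add_apply, Pi.smul_apply, smul_eq_mul, Complex.real_smul]
  calc ζ * y i = ((ζ.re : ℂ) + (ζ.im : ℂ) * Complex.I) * y i := by
        rw [Complex.re_add_im ζ]
    _ = (ζ.re : ℂ) * y i + (ζ.im : ℂ) * (Complex.I * y i) := by ring

/-- Entire maps into a convex domain containing no complex line are constant. -/
lemma entire_const {m : ℕ} {D : Set (Fin m → ℂ)} (hD : IsConvexDomain D)
    (hline : ¬ ContainsComplexLine D) {g : ℂ → Fin m → ℂ}
    (hg : Differentiable ℂ g) (hgD : ∀ ζ, g ζ ∈ D) (a b : ℂ) : g a = g b := by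
  by_contra hne
  set u : Fin m → ℂ := g b - g a with hu
  have hu0 : u ≠ 0 := sub_ne_zero.mpr fun h => hne h.symm
  -- closure step
  have hclos : ∀ z ∈ D, ∀ ζ : ℂ, z + ζ • u ∈ closure D := by
    intro z hz ζ
    by_contra hx
    obtain ⟨f, s, hfs, hsx⟩ :=
      geometric_hahn_banach_closed_point (hD.2.1.closure) isClosed_closure hx
    -- the complexified functional
    set ℓ : (Fin m → ℂ) → ℂ := fun y => (f y : ℂ) - (f (Complex.I • y) : ℂ) * Complex.I with hℓ
    have hre : ∀ y, (ℓ y).re = f y := by intro y; simp [hℓ]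
    have hsm : ∀ (ζ' : ℂ) (y : Fin m → ℂ), ℓ (ζ' • y) = ζ' * ℓ y := by
      intro ζ' y
      have h1 : f (ζ' • y) = ζ'.re * f y + ζ'.im * f (Complex.I • y) := by
        rw [smul_split]; simp [mul_comm]
      have h2 : f (Complex.I • ζ' • y) = ζ'.re * f (Complex.I • y) - ζ'.im * f y := by
        rw [smul_comm, smul_split]
        have : Complex.I • Complex.I • y = (-1 : ℝ) • y := by
          rw [smul_smul, Complex.I_mul_I]
          funext i; simp
        rw [this]
        simp [mul_comm]
        ring
      apply Complex.ext
      · simp [hℓ, h1, h2, Complex.mul_re]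
      · simp [hℓ, h1, h2, Complex.mul_im]
        ring
    have hadd : ∀ y₁ y₂, ℓ (y₁ + y₂) = ℓ y₁ + ℓ y₂ := by
      intro y₁ y₂
      simp only [hℓ, smul_add, map_add]
      push_cast
      ring
    set L : (Fin m → ℂ) →ₗ[ℂ] ℂ :=
      { toFun := ℓ, map_add' := hadd, map_smul' := fun c y => by simpa using hsm c y } with hL
    have hLd : Differentiable ℂ fun ζ' => L.toContinuousLinearMap (g ζ') :=
      L.toContinuousLinearMap.differentiable.comp hg
    have hbound : ∀ ζ', ((fun ζ' => L.toContinuousLinearMap (g ζ')) ζ').re ≤ s := by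
      intro ζ'
      have : (ℓ (g ζ')).re = f (g ζ') := hre _
      simp only [LinearMap.coe_toContinuousLinearMap']
      rw [hL]
      simp only [LinearMap.coe_mk, AddHom.coe_mk]
      rw [this]
      exact (hfs _ (subset_closure (hgD ζ'))).le
    have heq := halfplane_liouville hLd hbound a b
    have hgeq : ℓ (g a) = ℓ (g b) := by
      simpa [LinearMap.coe_toContinuousLinearMap', hL] using heq
    have hLu : ℓ u = 0 := by
      have hsub : u = g b + (-1 : ℂ) • g a := by rw [hu]; funext i; simp [sub_eq_add_neg]
      rw [hsub, hadd, hsm, hgeq]; ring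
    have hfzu : f (ζ • u) = 0 := by
      have := hre (ζ • u)
      rw [hsm ζ u, hLu, mul_zero] at this
      simpa using this.symm
    have : f (z + ζ • u) = f z := by rw [map_add, hfzu, add_zero]
    have hlt := hfs z (subset_closure hz)
    rw [this] at hsx
    linarith
  -- interior step
  have hDeq : interior D = D := hD.1.interior_eq
  have hall : ∀ z ∈ D, ∀ ζ : ℂ, z + ζ • u ∈ D := by
    intro z hz ζ
    have h2 : z + (2 * ζ) • u ∈ closure D := hclos z hz _
    have hz' : z ∈ interior D := by rw [hDeq]; exact hz
    have := hD.2.1.combo_interior_closure_mem_interior hz' h2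
      (by norm_num : (0:ℝ) < 1/2) (by norm_num : (0:ℝ) ≤ 1/2) (by norm_num)
    rw [hDeq] at this
    have hrw : (1/2 : ℝ) • z + (1/2 : ℝ) • (z + (2*ζ) • u) = z + ζ • u := by
      funext i
      simp only [Pi.add_apply, Pi.smul_apply, smul_eq_mul, Complex.real_smul]
      push_cast
      ring
    rwa [hrw] at this
  obtain ⟨z₀, hz₀⟩ := hD.2.2
  exact hline ⟨z₀, u, hu0, fun ζ => hall z₀ hz₀ ζ⟩

/-- structural observation in the final remark of the paper: if
`D' ⊆ ℂ^m` is a convex domain containing no complex affine line and `k ≥ 1`, then every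
holomorphic map `φ : D' × ℂ^k → ℂ^m` with image in `D'` does not depend on the second
variable; in particular every holomorphic self-map `f` of `D' × ℂ^k` has the form
`f(z, w) = (φ(z), ψ(z, w))` with `φ : D' → D'` holomorphic. -/
theorem self_maps_of_product {m k : ℕ} (D' : Set (Fin m → ℂ)) (hD : IsConvexDomain D')
    (hline : ¬ ContainsComplexLine D') (hk : 1 ≤ k) :
    (∀ φ : ((Fin m → ℂ) × (Fin k → ℂ)) → (Fin m → ℂ),
      DifferentiableOn ℂ φ (D' ×ˢ (Set.univ : Set (Fin k → ℂ))) →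
      (∀ p ∈ D' ×ˢ (Set.univ : Set (Fin k → ℂ)), φ p ∈ D') →
      ∀ z ∈ D', ∀ w w' : Fin k → ℂ, φ (z, w) = φ (z, w')) ∧
    (∀ f : ((Fin m → ℂ) × (Fin k → ℂ)) → ((Fin m → ℂ) × (Fin k → ℂ)),
      DifferentiableOn ℂ f (D' ×ˢ (Set.univ : Set (Fin k → ℂ))) →
      Set.MapsTo f (D' ×ˢ (Set.univ : Set (Fin k → ℂ)))
        (D' ×ˢ (Set.univ : Set (Fin k → ℂ))) →
      ∃ (φ : (Fin m → ℂ) → (Fin m → ℂ)) (ψ : ((Fin m → ℂ) × (Fin k → ℂ)) → (Fin k → ℂ)),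
        DifferentiableOn ℂ φ D' ∧ Set.MapsTo φ D' D' ∧
        ∀ z ∈ D', ∀ w : Fin k → ℂ, f (z, w) = (φ z, ψ (z, w))) := by
  have hopen : IsOpen (D' ×ˢ (Set.univ : Set (Fin k → ℂ))) := hD.1.prod isOpen_univ
  have part1 : ∀ φ : ((Fin m → ℂ) × (Fin k → ℂ)) → (Fin m → ℂ),
      DifferentiableOn ℂ φ (D' ×ˢ (Set.univ : Set (Fin k → ℂ))) →
      (∀ p ∈ D' ×ˢ (Set.univ : Set (Fin k → ℂ)), φ p ∈ D') →
      ∀ z ∈ D', ∀ w w' : Fin k → ℂ, φ (z, w) = φ (z, w') := by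
    intro φ hφ hmaps z hz w w'
    set g : ℂ → Fin m → ℂ := fun ζ => φ (z, w + ζ • (w' - w)) with hg
    have hmem : ∀ ζ : ℂ, (z, w + ζ • (w' - w)) ∈ D' ×ˢ (Set.univ : Set (Fin k → ℂ)) :=
      fun ζ => ⟨hz, Set.mem_univ _⟩
    have hgd : Differentiable ℂ g := by
      intro ζ
      have hc : DifferentiableAt ℂ (fun ζ : ℂ => (z, w + ζ • (w' - w))) ζ :=
        (differentiableAt_const z).prodMk
          ((differentiableAt_const w).add (differentiableAt_id.smul_const (w' - w)))
      exact (hφ.differentiableAt (hopen.mem_nhds (hmem ζ))).comp ζ hc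
    have hgD : ∀ ζ, g ζ ∈ D' := fun ζ => hmaps _ (hmem ζ)
    have := entire_const hD hline hgd hgD 0 1
    simpa [hg] using this
  refine ⟨part1, ?_⟩
  intro f hf hmaps
  refine ⟨fun z => (f (z, 0)).1, fun p => (f p).2, ?_, ?_, ?_⟩
  · intro z hz
    have hc : DifferentiableAt ℂ (fun z : Fin m → ℂ => f (z, (0 : Fin k → ℂ))) z :=
      (hf.differentiableAt (hopen.mem_nhds ⟨hz, Set.mem_univ _⟩)).comp z
        (differentiableAt_id.prodMk (differentiableAt_const 0))
    exact hc.fst.differentiableWithinAt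
  · intro z hz
    exact (hmaps ⟨hz, Set.mem_univ _⟩).1
  · intro z hz w
    have h1 : (fun p => (f p).1) (z, w) = (fun p => (f p).1) (z, (0 : Fin k → ℂ)) :=
      part1 (fun p => (f p).1) hf.fst (fun p hp => (hmaps hp).1) z hz w 0
    exact Prod.ext h1 rfl
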